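/- The class of SPBA-recognizable ω-languages is closed under finite union. -/

import Mathlib

/-- A linear subset of `ℕ^d`: all vectors `b₀ + z₁•b₁ + ... + z_ℓ•b_ℓ`. -/
def IsLinear {d : ℕ} (S : Set (Fin d → ℕ)) : Prop :=
  ∃ (b₀ : Fin d → ℕ) (ℓ : ℕ) (b : Fin ℓ → Fin d → ℕ),
    S = {v | ∃ z : Fin ℓ → ℕ, v = b₀ + ∑ i, z i • b i}

/-- A semi-linear subset of `ℕ^d`: a finite union of linear sets. -/
def IsSemilinear {d : ℕ} (S : Set (Fin d → ℕ)) : Prop :=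
  ∃ (n : ℕ) (T : Fin n → Set (Fin d → ℕ)), (∀ i, IsLinear (T i)) ∧ S = ⋃ i, T i

/-- The number of input-consuming steps among the first `i` steps. -/
def readCount (reads : ℕ → Bool) (i : ℕ) : ℕ :=
  ((Finset.range i).filter (fun j => reads j = true)).card

/-- A run of an ε-free vector-labeled automaton on the infinite word `α`:
`p` is the state sequence, `v i` the vector of the `i`-th transition. -/
def IsRun {Q Sig : Type} {d : ℕ} (q0 : Q) (Δ : Set (Q × Sig × (Fin d → ℕ) × Q))
    (α : ℕ → Sig) (p : ℕ → Q) (v : ℕ → Fin d → ℕ) : Prop :=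
  p 0 = q0 ∧ ∀ i, (p i, α i, v i, p (i + 1)) ∈ Δ

/-- A run of an automaton with ε-transitions `E` on the infinite word `α`;
`reads i = true` iff the `i`-th transition consumes an input symbol, and
infinitely many transitions must consume a symbol. -/
def IsEpsRun {Q Sig : Type} {d : ℕ} (q0 : Q) (Δ : Set (Q × Sig × (Fin d → ℕ) × Q))
    (E : Set (Q × (Fin d → ℕ) × Q)) (α : ℕ → Sig) (p : ℕ → Q) (v : ℕ → Fin d → ℕ)
    (reads : ℕ → Bool) : Prop :=
  p 0 = q0 ∧ (∀ N, ∃ i, N ≤ i ∧ reads i = true) ∧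
    ∀ i, if reads i then (p i, α (readCount reads i), v i, p (i + 1)) ∈ Δ
      else (p i, v i, p (i + 1)) ∈ E

/-- Prefix-acceptance: infinitely many positions `n ≥ 1` where the current state is
accepting and the accumulated vector sum lies in the (state-dependent) semi-linear set. -/
def PrefixCond {Q : Type} {d : ℕ} (F : Set Q) (C : Q → Set (Fin d → ℕ))
    (p : ℕ → Q) (v : ℕ → Fin d → ℕ) : Prop :=
  ∀ N, ∃ n, N ≤ n ∧ 1 ≤ n ∧ p n ∈ F ∧ (∑ j ∈ Finset.range n, v j) ∈ C (p n)

/-- Weak reset-acceptance: there are infinitely many reset positions `0 = k 0 < k 1 < ...`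
such that each `p (k (i+1))` is accepting and the vector sum between consecutive
reset positions lies in the corresponding semi-linear set. -/
def WeakCond {Q : Type} {d : ℕ} (F : Set Q) (C : Q → Set (Fin d → ℕ))
    (p : ℕ → Q) (v : ℕ → Fin d → ℕ) : Prop :=
  ∃ k : ℕ → ℕ, k 0 = 0 ∧ StrictMono k ∧
    ∀ i, p (k (i + 1)) ∈ F ∧
      (∑ j ∈ Finset.Ico (k i) (k (i + 1)), v j) ∈ C (p (k (i + 1)))

/-- Strong reset-acceptance: `k 1 < k 2 < ...` enumerates *all* positions `n ≥ 1` of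
accepting states (so there are infinitely many), and the vector sum between any two
consecutive such positions (with `k 0 = 0`) lies in the corresponding semi-linear set. -/
def StrongCond {Q : Type} {d : ℕ} (F : Set Q) (C : Q → Set (Fin d → ℕ))
    (p : ℕ → Q) (v : ℕ → Fin d → ℕ) : Prop :=
  ∃ k : ℕ → ℕ, k 0 = 0 ∧ StrictMono k ∧
    (∀ n, 1 ≤ n → (p n ∈ F ↔ ∃ i, 1 ≤ i ∧ k i = n)) ∧
    ∀ i, (∑ j ∈ Finset.Ico (k i) (k (i + 1)), v j) ∈ C (p (k (i + 1)))

/-- A Parikh(-Büchi) automaton of dimension `d` (also used as a Parikh automaton on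
finite words): finitely many states, vector-labeled transitions, a semi-linear set `C`. -/
structure PBA (Sig : Type) (d : ℕ) where
  Q : Type
  fin : Fintype Q
  q0 : Q
  Δ : Set (Q × Sig × (Fin d → ℕ) × Q)
  F : Set Q
  C : Set (Fin d → ℕ)

attribute [instance] PBA.fin

/-- `P_ω(A)`: the ω-language recognized under prefix-acceptance (PPBA). -/
def PBA.PrefixLang {Sig d} (A : PBA Sig d) : Set (ℕ → Sig) :=
  {α | ∃ p v, IsRun A.q0 A.Δ α p v ∧ PrefixCond A.F (fun _ => A.C) p v}

/-- `W_ω(A)`: the ω-language recognized under weak reset-acceptance (WPBA). -/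
def PBA.WeakLang {Sig d} (A : PBA Sig d) : Set (ℕ → Sig) :=
  {α | ∃ p v, IsRun A.q0 A.Δ α p v ∧ WeakCond A.F (fun _ => A.C) p v}

/-- `S_ω(A)`: the ω-language recognized under strong reset-acceptance (SPBA). -/
def PBA.StrongLang {Sig d} (A : PBA Sig d) : Set (ℕ → Sig) :=
  {α | ∃ p v, IsRun A.q0 A.Δ α p v ∧ StrongCond A.F (fun _ => A.C) p v}

/-- Acceptance of a finite word by a Parikh automaton. -/
def PBA.FinAccepts {Sig d} (A : PBA Sig d) (w : List Sig) : Prop :=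
  ∃ (p : ℕ → A.Q) (v : ℕ → Fin d → ℕ),
    p 0 = A.q0 ∧ (∀ i : Fin w.length, (p i, w.get i, v i, p (i + 1)) ∈ A.Δ) ∧
    p w.length ∈ A.F ∧ (∑ j ∈ Finset.range w.length, v j) ∈ A.C

/-- `L(A)`: the language of finite words recognized by a Parikh automaton. -/
def PBA.FinLang {Sig d} (A : PBA Sig d) : Set (List Sig) := {w | A.FinAccepts w}

/-- A Parikh-Büchi automaton with ε-transitions. -/
structure EpsPBA (Sig : Type) (d : ℕ) where
  Q : Type
  fin : Fintype Q
  q0 : Q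
  Δ : Set (Q × Sig × (Fin d → ℕ) × Q)
  E : Set (Q × (Fin d → ℕ) × Q)
  F : Set Q
  C : Set (Fin d → ℕ)

attribute [instance] EpsPBA.fin

def EpsPBA.PrefixLang {Sig d} (A : EpsPBA Sig d) : Set (ℕ → Sig) :=
  {α | ∃ p v reads, IsEpsRun A.q0 A.Δ A.E α p v reads ∧ PrefixCond A.F (fun _ => A.C) p v}

def EpsPBA.WeakLang {Sig d} (A : EpsPBA Sig d) : Set (ℕ → Sig) :=
  {α | ∃ p v reads, IsEpsRun A.q0 A.Δ A.E α p v reads ∧ WeakCond A.F (fun _ => A.C) p v}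

def EpsPBA.StrongLang {Sig d} (A : EpsPBA Sig d) : Set (ℕ → Sig) :=
  {α | ∃ p v reads, IsEpsRun A.q0 A.Δ A.E α p v reads ∧ StrongCond A.F (fun _ => A.C) p v}

/-- A Multi-PBA: every (accepting) state carries its own semi-linear set. -/
structure MPBA (Sig : Type) (d : ℕ) where
  Q : Type
  fin : Fintype Q
  q0 : Q
  Δ : Set (Q × Sig × (Fin d → ℕ) × Q)
  F : Set Q
  C : Q → Set (Fin d → ℕ)

attribute [instance] MPBA.fin

def MPBA.PrefixLang {Sig d} (A : MPBA Sig d) : Set (ℕ → Sig) :=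
  {α | ∃ p v, IsRun A.q0 A.Δ α p v ∧ PrefixCond A.F A.C p v}

/-- A Multi-PBA with ε-transitions. -/
structure EpsMPBA (Sig : Type) (d : ℕ) where
  Q : Type
  fin : Fintype Q
  q0 : Q
  Δ : Set (Q × Sig × (Fin d → ℕ) × Q)
  E : Set (Q × (Fin d → ℕ) × Q)
  F : Set Q
  C : Q → Set (Fin d → ℕ)

attribute [instance] EpsMPBA.fin

def EpsMPBA.StrongLang {Sig d} (A : EpsMPBA Sig d) : Set (ℕ → Sig) :=
  {α | ∃ p v reads, IsEpsRun A.q0 A.Δ A.E α p v reads ∧ StrongCond A.F A.C p v}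

/-- A language of finite words is Parikh-recognizable. -/
def ParikhRec {Sig : Type} (L : Set (List Sig)) : Prop :=
  ∃ d, ∃ A : PBA Sig d, IsSemilinear A.C ∧ A.FinLang = L

/-- An ω-language is PPBA-recognizable. -/
def PPBARec {Sig : Type} (L : Set (ℕ → Sig)) : Prop :=
  ∃ d, ∃ A : PBA Sig d, IsSemilinear A.C ∧ A.PrefixLang = L

/-- An ω-language is SPBA-recognizable. -/
def SPBARec {Sig : Type} (L : Set (ℕ → Sig)) : Prop :=
  ∃ d, ∃ A : PBA Sig d, IsSemilinear A.C ∧ A.StrongLang = L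

/-- Concatenation of a language of finite words with an ω-language. -/
def CatLang {Sig : Type} (L₁ : Set (List Sig)) (L₂ : Set (ℕ → Sig)) : Set (ℕ → Sig) :=
  {α | ∃ u ∈ L₁, ∃ β ∈ L₂,
    (∀ i : Fin u.length, α i = u.get i) ∧ ∀ n, β n = α (u.length + n)}

/-- `α` is the concatenation `w 0 ++ w 1 ++ w 2 ++ ⋯` of the finite words `w i`. -/
def IsOmegaConcat {Sig : Type} (w : ℕ → List Sig) (α : ℕ → Sig) : Prop :=
  ∀ n : ℕ, ∀ i : Fin (((List.range n).map w).flatten.length),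
    ((List.range n).map w).flatten.get i = α i

/-- The ω-power `L^ω = {w₁w₂w₃⋯ ∣ w_i ∈ L ∖ {ε}}`. -/
def OmegaPower {Sig : Type} (L : Set (List Sig)) : Set (ℕ → Sig) :=
  {α | ∃ w : ℕ → List Sig, (∀ i, w i ∈ L) ∧ (∀ i, w i ≠ []) ∧ IsOmegaConcat w α}

/-- Kleene star of a set of finite words. -/
def ListStar {Sig : Type} (L : Set (List Sig)) : Set (List Sig) :=
  {w | ∃ ws : List (List Sig), (∀ u ∈ ws, u ∈ L) ∧ w = ws.flatten}

/-- A (nondeterministic) Büchi automaton. -/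
structure BuchiNFA (Sig : Type) where
  Q : Type
  fin : Fintype Q
  q0 : Q
  Δ : Set (Q × Sig × Q)
  F : Set Q

attribute [instance] BuchiNFA.fin

def BuchiNFA.Lang {Sig} (B : BuchiNFA Sig) : Set (ℕ → Sig) :=
  {α | ∃ p : ℕ → B.Q, p 0 = B.q0 ∧ (∀ i, (p i, α i, p (i + 1)) ∈ B.Δ) ∧
    ∀ N, ∃ n, N ≤ n ∧ p n ∈ B.F}

/-- An ω-language is ω-regular if it is recognized by a Büchi automaton. -/
def OmegaRegular {Sig : Type} (R : Set (ℕ → Sig)) : Prop := ∃ B : BuchiNFA Sig, B.Lang = R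

/-- A blind `k`-counter machine: transitions are labeled by a letter or ε (`Option Sig`)
and an integer vector. -/
structure CM (Sig : Type) (k : ℕ) where
  Q : Type
  fin : Fintype Q
  q0 : Q
  Δ : Set (Q × Option Sig × (Fin k → ℤ) × Q)
  F : Set Q

attribute [instance] CM.fin

/-- The ω-language of a blind counter machine: some run reads every symbol of `α`
and is infinitely often in an accepting state with all counters equal to `0`. -/
def CM.Lang {Sig k} (M : CM Sig k) : Set (ℕ → Sig) :=
  {α | ∃ (p : ℕ → M.Q) (v : ℕ → Fin k → ℤ) (reads : ℕ → Bool),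
    p 0 = M.q0 ∧ (∀ N, ∃ i, N ≤ i ∧ reads i = true) ∧
    (∀ i, if reads i then (p i, some (α (readCount reads i)), v i, p (i + 1)) ∈ M.Δ
      else (p i, (none : Option Sig), v i, p (i + 1)) ∈ M.Δ) ∧
    ∀ N, ∃ n, N ≤ n ∧ p n ∈ M.F ∧ (∑ j ∈ Finset.range n, v j) = 0}
namespace SPBAUnionAux

def pad1 (d₁ d₂ : ℕ) (x : Fin d₁ → ℕ) : Fin (d₁ + d₂ + 1) → ℕ :=
  fun i => if h : (i : ℕ) < d₁ then x ⟨i, h⟩ else 0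

def pad2 (d₁ d₂ : ℕ) (y : Fin d₂ → ℕ) : Fin (d₁ + d₂ + 1) → ℕ :=
  fun i => if h : d₁ ≤ (i : ℕ) ∧ (i : ℕ) < d₁ + d₂ then y ⟨(i : ℕ) - d₁, by omega⟩ else 0

def etag (d₁ d₂ : ℕ) : Fin (d₁ + d₂ + 1) → ℕ :=
  fun i => if (i : ℕ) = d₁ + d₂ then 1 else 0

variable {d₁ d₂ : ℕ}

lemma pad1_add (a b : Fin d₁ → ℕ) :
    pad1 d₁ d₂ (a + b) = pad1 d₁ d₂ a + pad1 d₁ d₂ b := by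
  funext i; simp only [pad1, Pi.add_apply]; split <;> simp

lemma pad1_smul (z : ℕ) (a : Fin d₁ → ℕ) :
    pad1 d₁ d₂ (z • a) = z • pad1 d₁ d₂ a := by
  funext i; simp only [pad1, Pi.smul_apply]; split <;> simp

lemma pad1_zero : pad1 d₁ d₂ 0 = 0 := by
  funext i; simp only [pad1, Pi.zero_apply]; split <;> simp

lemma pad2_add (a b : Fin d₂ → ℕ) :
    pad2 d₁ d₂ (a + b) = pad2 d₁ d₂ a + pad2 d₁ d₂ b := by
  funext i; simp only [pad2, Pi.add_apply]; split <;> simp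

lemma pad2_smul (z : ℕ) (a : Fin d₂ → ℕ) :
    pad2 d₁ d₂ (z • a) = z • pad2 d₁ d₂ a := by
  funext i; simp only [pad2, Pi.smul_apply]; split <;> simp

lemma pad2_zero : pad2 d₁ d₂ 0 = 0 := by
  funext i; simp only [pad2, Pi.zero_apply]; split <;> simp

lemma pad1_castLE (x : Fin d₁ → ℕ) (i : Fin d₁) :
    pad1 d₁ d₂ x (Fin.castLE (by omega) i) = x i := by
  simp only [pad1]
  rw [dif_pos (by exact i.isLt)]
  congr 1

lemma etag_castLE (i : Fin d₁) :
    etag d₁ d₂ (Fin.castLE (by omega) i) = 0 := by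
  simp only [etag]
  rw [if_neg (by have := i.isLt; simp only [Fin.coe_castLE]; omega)]

lemma pad2_castLE (y : Fin d₂ → ℕ) (i : Fin d₁) :
    pad2 d₁ d₂ y (Fin.castLE (by omega) i) = 0 := by
  simp only [pad2]
  rw [dif_neg (by have := i.isLt; simp only [Fin.coe_castLE]; omega)]

lemma pad2_at2 (y : Fin d₂ → ℕ) (i : Fin d₂) :
    pad2 d₁ d₂ y ⟨d₁ + i, by omega⟩ = y i := by
  simp only [pad2]
  rw [dif_pos (by constructor <;> [omega; (have := i.isLt; omega)])]
  congr 1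
  ext
  simp

lemma pad1_at2 (x : Fin d₁ → ℕ) (i : Fin d₂) :
    pad1 d₁ d₂ x ⟨d₁ + i, by omega⟩ = 0 := by
  simp only [pad1]; rw [dif_neg (by omega)]

lemma etag_at2 (i : Fin d₂) :
    etag d₁ d₂ ⟨d₁ + i, by omega⟩ = 0 := by
  simp only [etag]; rw [if_neg (by have := i.isLt; omega)]

def tagIdx (d₁ d₂ : ℕ) : Fin (d₁ + d₂ + 1) := ⟨d₁ + d₂, by omega⟩

lemma pad1_tag (x : Fin d₁ → ℕ) : pad1 d₁ d₂ x (tagIdx d₁ d₂) = 0 := by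
  simp only [pad1, tagIdx]; exact dif_neg (by omega)

lemma pad2_tag (y : Fin d₂ → ℕ) : pad2 d₁ d₂ y (tagIdx d₁ d₂) = 0 := by
  simp only [pad2, tagIdx]; exact dif_neg (by omega)

lemma etag_tag : etag d₁ d₂ (tagIdx d₁ d₂) = 1 := by
  simp [etag, tagIdx]

lemma map_sum_of_add {d e : ℕ} (f : (Fin d → ℕ) → (Fin e → ℕ))
    (hadd : ∀ a b, f (a + b) = f a + f b) (h0 : f 0 = 0)
    (s : Finset ℕ) (g : ℕ → Fin d → ℕ) :
    f (∑ j ∈ s, g j) = ∑ j ∈ s, f (g j) := by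
  classical
  induction s using Finset.induction with
  | empty => simpa
  | insert _ _ hj ih => rw [Finset.sum_insert hj, Finset.sum_insert hj, hadd, ih]

end SPBAUnionAux

namespace SPBAUnionAux

lemma semilinear_union {d : ℕ} {S T : Set (Fin d → ℕ)}
    (hS : IsSemilinear S) (hT : IsSemilinear T) : IsSemilinear (S ∪ T) := by
  obtain ⟨n, P, hP, rfl⟩ := hS
  obtain ⟨m, R, hR, rfl⟩ := hT
  refine ⟨n + m, Fin.addCases P R, fun i => ?_, ?_⟩
  · refine Fin.addCases (motive := fun i => IsLinear (Fin.addCases P R i)) ?_ ?_ i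
    · intro j; rw [Fin.addCases_left]; exact hP j
    · intro j; rw [Fin.addCases_right]; exact hR j
  · ext x
    simp only [Set.mem_union, Set.mem_iUnion]
    constructor
    · rintro (⟨j, h⟩ | ⟨j, h⟩)
      · exact ⟨Fin.castAdd m j, by rwa [Fin.addCases_left]⟩
      · exact ⟨Fin.natAdd n j, by rwa [Fin.addCases_right]⟩
    · rintro ⟨i, h⟩
      revert h
      refine Fin.addCases
        (motive := fun i => x ∈ (Fin.addCases (motive := fun _ => Set (Fin d → ℕ)) P R i) → (∃ j, x ∈ P j) ∨ ∃ j, x ∈ R j) ?_ ?_ i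
      · intro j h; rw [Fin.addCases_left] at h; exact Or.inl ⟨j, h⟩
      · intro j h; rw [Fin.addCases_right] at h; exact Or.inr ⟨j, h⟩

lemma semilinear_map {d e : ℕ} {C : Set (Fin d → ℕ)} (hC : IsSemilinear C)
    (f : (Fin d → ℕ) → (Fin e → ℕ))
    (hadd : ∀ a b, f (a + b) = f a + f b)
    (hsmul : ∀ (z : ℕ) (a : Fin d → ℕ), f (z • a) = z • f a)
    (w : Fin e → ℕ) :
    IsSemilinear {u | ∃ x ∈ C, ∃ t, 1 ≤ t ∧ u = f x + t • w} := by
  have h0 : f 0 = 0 := by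
    have := hsmul 0 0; simpa using this
  obtain ⟨n, T, hT, rfl⟩ := hC
  refine ⟨n, fun j => {u | ∃ x ∈ T j, ∃ t, 1 ≤ t ∧ u = f x + t • w}, fun j => ?_, ?_⟩
  · obtain ⟨b₀, ℓ, b, hTj⟩ := hT j
    refine ⟨f b₀ + w, ℓ + 1, Fin.cons w (fun i => f (b i)), ?_⟩
    ext u
    simp only [hTj, Set.mem_setOf_eq]
    constructor
    · rintro ⟨x, ⟨z, rfl⟩, t, ht, rfl⟩
      refine ⟨Fin.cons (t - 1) z, ?_⟩
      rw [Fin.sum_univ_succ]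
      simp only [Fin.cons_zero, Fin.cons_succ]
      rw [hadd]
      rw [show f (∑ i, z i • b i) = ∑ i, f (z i • b i) by
        classical
        induction (Finset.univ : Finset (Fin ℓ)) using Finset.induction with
        | empty => simpa
        | insert _ _ hj ih => rw [Finset.sum_insert hj, Finset.sum_insert hj, hadd, ih]]
      simp only [hsmul]
      have hw : (t - 1) • w + w = t • w := by
        rw [← succ_nsmul]; congr 1; omega
      rw [← hw]
      abel
    · rintro ⟨z, rfl⟩
      refine ⟨b₀ + ∑ i, (z i.succ) • b i, ⟨fun i => z i.succ, rfl⟩, z 0 + 1, by omega, ?_⟩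
      rw [Fin.sum_univ_succ]
      simp only [Fin.cons_zero, Fin.cons_succ]
      rw [hadd]
      rw [show f (∑ i, z i.succ • b i) = ∑ i, f (z i.succ • b i) by
        classical
        induction (Finset.univ : Finset (Fin ℓ)) using Finset.induction with
        | empty => simpa
        | insert _ _ hj ih => rw [Finset.sum_insert hj, Finset.sum_insert hj, hadd, ih]]
      simp only [hsmul]
      have hw : (z 0 + 1) • w = w + z 0 • w := by
        rw [succ_nsmul]; abel
      rw [hw]
      abel
  · ext u
    simp only [Set.mem_iUnion, Set.mem_setOf_eq]
    constructor
    · rintro ⟨x, ⟨j, hj⟩, rest⟩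
      exact ⟨j, x, hj, rest⟩
    · rintro ⟨j, x, hj, rest⟩
      exact ⟨x, ⟨j, hj⟩, rest⟩

def UC {d₁ d₂ : ℕ} (C₁ : Set (Fin d₁ → ℕ)) (C₂ : Set (Fin d₂ → ℕ)) :
    Set (Fin (d₁ + d₂ + 1) → ℕ) :=
  {u | ∃ x ∈ C₁, ∃ t, 1 ≤ t ∧ u = pad1 d₁ d₂ x + t • etag d₁ d₂} ∪
  {u | ∃ y ∈ C₂, u = pad2 d₁ d₂ y}

lemma UC_semilinear {d₁ d₂ : ℕ} {C₁ : Set (Fin d₁ → ℕ)} {C₂ : Set (Fin d₂ → ℕ)}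
    (hC₁ : IsSemilinear C₁) (hC₂ : IsSemilinear C₂) : IsSemilinear (UC C₁ C₂) := by
  apply semilinear_union
  · exact semilinear_map hC₁ (pad1 d₁ d₂) pad1_add pad1_smul (etag d₁ d₂)
  · have h := semilinear_map hC₂ (pad2 d₁ d₂) pad2_add pad2_smul 0
    convert h using 1
    ext u
    simp only [Set.mem_setOf_eq]
    constructor
    · rintro ⟨y, hy, rfl⟩; exact ⟨y, hy, 1, le_refl _, by simp⟩
    · rintro ⟨y, hy, t, ht, rfl⟩; exact ⟨y, hy, by simp⟩

end SPBAUnionAux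

namespace SPBAUnionAux

variable {Sig : Type} {d₁ d₂ : ℕ}

def getL {Q₁ Q₂ : Type} (q0 : Q₁) : Option (Q₁ ⊕ Q₂) → Q₁
  | some (Sum.inl q) => q
  | _ => q0

def getR {Q₁ Q₂ : Type} (q0 : Q₂) : Option (Q₁ ⊕ Q₂) → Q₂
  | some (Sum.inr q) => q
  | _ => q0

@[simp] lemma getL_inl {Q₁ Q₂ : Type} (q0 q : Q₁) :
    getL (Q₂ := Q₂) q0 (some (Sum.inl q)) = q := rfl
@[simp] lemma getL_none {Q₁ Q₂ : Type} (q0 : Q₁) :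
    getL (Q₂ := Q₂) q0 none = q0 := rfl
@[simp] lemma getR_inr {Q₁ Q₂ : Type} (q0 q : Q₂) :
    getR (Q₁ := Q₁) q0 (some (Sum.inr q)) = q := rfl
@[simp] lemma getR_none {Q₁ Q₂ : Type} (q0 : Q₂) :
    getR (Q₁ := Q₁) q0 none = q0 := rfl

def UA (A₁ : PBA Sig d₁) (A₂ : PBA Sig d₂) : PBA Sig (d₁ + d₂ + 1) where
  Q := Option (A₁.Q ⊕ A₂.Q)
  fin := inferInstance
  q0 := none
  Δ := {t | (∃ q a x q', (q, a, x, q') ∈ A₁.Δ ∧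
          (t.1 = some (Sum.inl q) ∨ (t.1 = none ∧ q = A₁.q0)) ∧
          t.2.1 = a ∧ t.2.2.1 = pad1 d₁ d₂ x + etag d₁ d₂ ∧ t.2.2.2 = some (Sum.inl q'))
      ∨ (∃ q a y q', (q, a, y, q') ∈ A₂.Δ ∧
          (t.1 = some (Sum.inr q) ∨ (t.1 = none ∧ q = A₂.q0)) ∧
          t.2.1 = a ∧ t.2.2.1 = pad2 d₁ d₂ y ∧ t.2.2.2 = some (Sum.inr q'))}
  F := {s | (∃ q ∈ A₁.F, s = some (Sum.inl q)) ∨ (∃ q ∈ A₂.F, s = some (Sum.inr q))}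
  C := UC A₁.C A₂.C

lemma sum_pad1_etag (v : ℕ → Fin d₁ → ℕ) (s : Finset ℕ) :
    ∑ j ∈ s, (pad1 d₁ d₂ (v j) + etag d₁ d₂) =
      pad1 d₁ d₂ (∑ j ∈ s, v j) + s.card • etag d₁ d₂ := by
  rw [Finset.sum_add_distrib, map_sum_of_add (pad1 d₁ d₂) pad1_add pad1_zero,
    Finset.sum_const]

lemma strong_left (A₁ : PBA Sig d₁) (A₂ : PBA Sig d₂) :
    A₁.StrongLang ⊆ (UA A₁ A₂).StrongLang := by
  rintro α ⟨p, v, ⟨hp0, hstep⟩, k, hk0, hkmono, hkF, hkC⟩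
  refine ⟨fun n => if n = 0 then none else some (Sum.inl (p n)),
    fun n => pad1 d₁ d₂ (v n) + etag d₁ d₂, ⟨rfl, ?_⟩, k, hk0, hkmono, ?_, ?_⟩
  · intro i
    refine Or.inl ⟨p i, α i, v i, p (i + 1), hstep i, ?_, rfl, rfl, by simp⟩
    by_cases hi : i = 0
    · subst hi; exact Or.inr ⟨by simp, hp0⟩
    · exact Or.inl (by simp [hi])
  · intro n hn
    have hn' : n ≠ 0 := by omega
    rw [← hkF n hn]
    constructor
    · rintro (⟨q, hq, heq⟩ | ⟨q, hq, heq⟩)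
      · simp only [if_neg hn'] at heq
        rw [show p n = q from Sum.inl.inj (Option.some.inj ((if_neg hn').symm.trans heq))]; exact hq
      · simp only [if_neg hn'] at heq
        exact absurd (Option.some.inj ((if_neg hn').symm.trans heq)) (by simp)
    · intro h; exact Or.inl ⟨p n, h, by simp [hn']⟩
  · intro i
    have hlen : 1 ≤ (Finset.Ico (k i) (k (i + 1))).card := by
      rw [Nat.card_Ico]
      have := hkmono (show i < i + 1 by omega); omega
    rw [sum_pad1_etag]
    refine Or.inl ⟨∑ j ∈ Finset.Ico (k i) (k (i + 1)), v j, ?_, _, hlen, rfl⟩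
    exact hkC i

lemma strong_right (A₁ : PBA Sig d₁) (A₂ : PBA Sig d₂) :
    A₂.StrongLang ⊆ (UA A₁ A₂).StrongLang := by
  rintro α ⟨p, v, ⟨hp0, hstep⟩, k, hk0, hkmono, hkF, hkC⟩
  refine ⟨fun n => if n = 0 then none else some (Sum.inr (p n)),
    fun n => pad2 d₁ d₂ (v n), ⟨rfl, ?_⟩, k, hk0, hkmono, ?_, ?_⟩
  · intro i
    refine Or.inr ⟨p i, α i, v i, p (i + 1), hstep i, ?_, rfl, rfl, by simp⟩
    by_cases hi : i = 0
    · subst hi; exact Or.inr ⟨by simp, hp0⟩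
    · exact Or.inl (by simp [hi])
  · intro n hn
    have hn' : n ≠ 0 := by omega
    rw [← hkF n hn]
    constructor
    · rintro (⟨q, hq, heq⟩ | ⟨q, hq, heq⟩)
      · simp only [if_neg hn'] at heq
        exact absurd (Option.some.inj ((if_neg hn').symm.trans heq)) (by simp)
      · simp only [if_neg hn'] at heq
        rw [show p n = q from Sum.inr.inj (Option.some.inj ((if_neg hn').symm.trans heq))]; exact hq
    · intro h; exact Or.inr ⟨p n, h, by simp [hn']⟩
  · intro i
    rw [← map_sum_of_add (pad2 d₁ d₂) pad2_add pad2_zero]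
    exact Or.inr ⟨∑ j ∈ Finset.Ico (k i) (k (i + 1)), v j, hkC i, rfl⟩

end SPBAUnionAux

namespace SPBAUnionAux

variable {Sig : Type} {d₁ d₂ : ℕ}

lemma strong_sub (A₁ : PBA Sig d₁) (A₂ : PBA Sig d₂) :
    (UA A₁ A₂).StrongLang ⊆ A₁.StrongLang ∪ A₂.StrongLang := by
  rintro α ⟨p', v', ⟨hp0, hstep⟩, k, hk0, hkmono, hkF, hkC⟩
  have hp0' : p' 0 = none := hp0
  rcases hstep 0 with ⟨q, a, x, q', hΔ, hs, ha, hv, ht⟩ |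
      ⟨q, a, y, q', hΔ, hs, ha, hv, ht⟩
  · -- component 1
    have hall : ∀ n, 1 ≤ n → ∃ r, p' n = some (Sum.inl r) := by
      intro n hn
      induction n with
      | zero => omega
      | succ m ih =>
        rcases Nat.eq_zero_or_pos m with hm | hm
        · subst hm; exact ⟨q', ht⟩
        · obtain ⟨r, hr⟩ := ih hm
          rcases hstep m with ⟨q₁, a₁, x₁, q₁', h₁, hs₁, _, _, ht₁⟩ |
              ⟨q₁, a₁, y₁, q₁', h₁, hs₁, _, _, ht₁⟩
          · exact ⟨q₁', ht₁⟩
          · rcases hs₁ with hs₁ | ⟨hs₁, _⟩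
            · rw [hr] at hs₁; exact absurd hs₁ (by simp)
            · rw [hr] at hs₁; exact absurd hs₁ (by simp)
    set p : ℕ → A₁.Q := fun n => getL A₁.q0 (p' n) with hp
    set v : ℕ → Fin d₁ → ℕ := fun n i => v' n (Fin.castLE (by omega) i) with hvdef
    have hstep1 : ∀ n, (p n, α n, v n, p (n + 1)) ∈ A₁.Δ ∧
        v' n = pad1 d₁ d₂ (v n) + etag d₁ d₂ := by
      intro n
      obtain ⟨r, hr⟩ := hall (n + 1) (by omega)
      rcases hstep n with ⟨q₁, a₁, x₁, q₁', h₁, hs₁, ha₁, hv₁, ht₁⟩ |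
          ⟨q₁, a₁, y₁, q₁', h₁, hs₁, ha₁, hv₁, ht₁⟩
      · dsimp only at hs₁ ha₁ hv₁ ht₁
        have hx : v n = x₁ := by
          funext i
          show v' n (Fin.castLE (by omega) i) = x₁ i
          rw [hv₁, Pi.add_apply, pad1_castLE, etag_castLE, add_zero]
        have hpn : p n = q₁ := by
          rcases hs₁ with h | ⟨h, hq⟩
          · rw [hp]; simp only []; rw [h, getL_inl]
          · rw [hp]; simp only []; rw [h, getL_none, hq]
        have hpn1 : p (n + 1) = q₁' := by
          rw [hp]; simp only []; rw [ht₁, getL_inl]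
        refine ⟨?_, by rw [hv₁, hx]⟩
        rw [hpn, hpn1, ha₁, hx]; exact h₁
      · dsimp only at ht₁
        rw [hr] at ht₁; exact absurd ht₁ (by simp)
    refine Or.inl ⟨p, v, ⟨by rw [hp]; simp only []; rw [hp0', getL_none],
      fun i => (hstep1 i).1⟩, k, hk0, hkmono, ?_, ?_⟩
    · intro n hn
      obtain ⟨r, hr⟩ := hall n hn
      have hpn : p n = r := by rw [hp]; simp only []; rw [hr, getL_inl]
      rw [← hkF n hn]
      constructor
      · intro h
        exact Or.inl ⟨p n, h, by rw [hr, hpn]⟩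
      · rintro (⟨q₂, hq₂, heq⟩ | ⟨q₂, hq₂, heq⟩)
        · rw [hr] at heq
          rw [hpn, show r = q₂ from Sum.inl.inj (Option.some.inj heq)]
          exact hq₂
        · rw [hr] at heq; exact absurd heq (by simp)
    · intro i
      have hsum : ∑ j ∈ Finset.Ico (k i) (k (i + 1)), v' j
          = pad1 d₁ d₂ (∑ j ∈ Finset.Ico (k i) (k (i + 1)), v j)
            + (Finset.Ico (k i) (k (i + 1))).card • etag d₁ d₂ := by
        rw [← sum_pad1_etag]
        exact Finset.sum_congr rfl fun j _ => (hstep1 j).2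
      have hcard : 1 ≤ (Finset.Ico (k i) (k (i + 1))).card := by
        rw [Nat.card_Ico]; have := hkmono (show i < i + 1 by omega); omega
      have hmem := hkC i
      rw [hsum] at hmem
      rcases hmem with ⟨x₂, hx₂, t, ht₂, heq⟩ | ⟨y₂, hy₂, heq⟩
      · have hEq : (∑ j ∈ Finset.Ico (k i) (k (i + 1)), v j) = x₂ := by
          funext i₂
          have h := congrFun heq (Fin.castLE (by omega) i₂)
          simpa [pad1_castLE, etag_castLE] using h
        rw [hEq]; exact hx₂
      · exfalso
        have h := congrFun heq (tagIdx d₁ d₂)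
        simp only [Pi.add_apply, Pi.smul_apply, pad1_tag, etag_tag, pad2_tag,
          smul_eq_mul, mul_one, zero_add] at h
        omega
  · -- component 2
    have hall : ∀ n, 1 ≤ n → ∃ r, p' n = some (Sum.inr r) := by
      intro n hn
      induction n with
      | zero => omega
      | succ m ih =>
        rcases Nat.eq_zero_or_pos m with hm | hm
        · subst hm; exact ⟨q', ht⟩
        · obtain ⟨r, hr⟩ := ih hm
          rcases hstep m with ⟨q₁, a₁, x₁, q₁', h₁, hs₁, _, _, ht₁⟩ |
              ⟨q₁, a₁, y₁, q₁', h₁, hs₁, _, _, ht₁⟩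
          · rcases hs₁ with hs₁ | ⟨hs₁, _⟩
            · rw [hr] at hs₁; exact absurd hs₁ (by simp)
            · rw [hr] at hs₁; exact absurd hs₁ (by simp)
          · exact ⟨q₁', ht₁⟩
    set p : ℕ → A₂.Q := fun n => getR A₂.q0 (p' n) with hp
    set v : ℕ → Fin d₂ → ℕ := fun n i => v' n ⟨d₁ + i, by omega⟩ with hvdef
    have hstep1 : ∀ n, (p n, α n, v n, p (n + 1)) ∈ A₂.Δ ∧
        v' n = pad2 d₁ d₂ (v n) := by
      intro n
      obtain ⟨r, hr⟩ := hall (n + 1) (by omega)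
      rcases hstep n with ⟨q₁, a₁, x₁, q₁', h₁, hs₁, ha₁, hv₁, ht₁⟩ |
          ⟨q₁, a₁, y₁, q₁', h₁, hs₁, ha₁, hv₁, ht₁⟩
      · dsimp only at ht₁
        rw [hr] at ht₁; exact absurd ht₁ (by simp)
      · dsimp only at hs₁ ha₁ hv₁ ht₁
        have hx : v n = y₁ := by
          funext i
          show v' n ⟨d₁ + i, by omega⟩ = y₁ i
          rw [hv₁, pad2_at2]
        have hpn : p n = q₁ := by
          rcases hs₁ with h | ⟨h, hq⟩
          · rw [hp]; simp only []; rw [h, getR_inr]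
          · rw [hp]; simp only []; rw [h, getR_none, hq]
        have hpn1 : p (n + 1) = q₁' := by
          rw [hp]; simp only []; rw [ht₁, getR_inr]
        refine ⟨?_, by rw [hv₁, hx]⟩
        rw [hpn, hpn1, ha₁, hx]; exact h₁
    refine Or.inr ⟨p, v, ⟨by rw [hp]; simp only []; rw [hp0', getR_none],
      fun i => (hstep1 i).1⟩, k, hk0, hkmono, ?_, ?_⟩
    · intro n hn
      obtain ⟨r, hr⟩ := hall n hn
      have hpn : p n = r := by rw [hp]; simp only []; rw [hr, getR_inr]
      rw [← hkF n hn]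
      constructor
      · intro h
        exact Or.inr ⟨p n, h, by rw [hr, hpn]⟩
      · rintro (⟨q₂, hq₂, heq⟩ | ⟨q₂, hq₂, heq⟩)
        · rw [hr] at heq; exact absurd heq (by simp)
        · rw [hr] at heq
          rw [hpn, show r = q₂ from Sum.inr.inj (Option.some.inj heq)]
          exact hq₂
    · intro i
      have hsum : ∑ j ∈ Finset.Ico (k i) (k (i + 1)), v' j
          = pad2 d₁ d₂ (∑ j ∈ Finset.Ico (k i) (k (i + 1)), v j) := by
        rw [map_sum_of_add (pad2 d₁ d₂) pad2_add pad2_zero]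
        exact Finset.sum_congr rfl fun j _ => (hstep1 j).2
      have hmem := hkC i
      rw [hsum] at hmem
      rcases hmem with ⟨x₂, hx₂, t, ht₂, heq⟩ | ⟨y₂, hy₂, heq⟩
      · exfalso
        have h := congrFun heq (tagIdx d₁ d₂)
        simp only [Pi.add_apply, Pi.smul_apply, pad1_tag, etag_tag, pad2_tag,
          smul_eq_mul, mul_one, zero_add] at h
        omega
      · have hEq : (∑ j ∈ Finset.Ico (k i) (k (i + 1)), v j) = y₂ := by
          funext i₂
          have h := congrFun heq ⟨d₁ + i₂, by omega⟩
          rwa [pad2_at2, pad2_at2] at h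
        rw [hEq]; exact hy₂

end SPBAUnionAux


/-- The class of SPBA-recognizable ω-languages is closed under (finite) union. -/
theorem SPBA_closed_union {Sig : Type} (L₁ L₂ : Set (ℕ → Sig))
    (h₁ : SPBARec L₁) (h₂ : SPBARec L₂) : SPBARec (L₁ ∪ L₂) := by
  obtain ⟨d₁, A₁, hC₁, hL₁⟩ := h₁
  obtain ⟨d₂, A₂, hC₂, hL₂⟩ := h₂
  refine ⟨d₁ + d₂ + 1, SPBAUnionAux.UA A₁ A₂, SPBAUnionAux.UC_semilinear hC₁ hC₂, ?_⟩
  apply Set.eq_of_subset_of_subset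
  · rw [← hL₁, ← hL₂]; exact SPBAUnionAux.strong_sub A₁ A₂
  · rw [← hL₁, ← hL₂]
    exact Set.union_subset (SPBAUnionAux.strong_left A₁ A₂)
      (SPBAUnionAux.strong_right A₁ A₂)
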